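/- (Theorem 5.5, d = 2, uniqueness form) Let n ≥ 1, r > 0, M > 0. Then there exists a finite set Γ of oriented lines in ℝ² with #Γ = #(B_r ∩ ℤ²) such that: whenever f, g : ℤ² → M(n,ℂ) vanish outside B_r ∩ ℤ², satisfy ‖f(z)‖ ≤ M and ‖g(z)‖ ≤ M for all z ∈ ℤ² (where ‖A‖ = √(Trace(A†A))), and S*(f)(γ) = S*(g)(γ) for every γ ∈ Γ, then f = g. -/

import Mathlib

set_option maxHeartbeats 1000000


noncomputable section

open Matrix

/-- Embedding of the lattice `ℤ^d` into Euclidean `ℝ^d`. -/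
def emb {d : ℕ} (z : Fin d → ℤ) : EuclideanSpace ℝ (Fin d) := WithLp.toLp 2 (fun i => (z i : ℝ))

/- Ordered product of `Φ` over `supp`: the factors are multiplied so that larger values
of `key` contribute factors further to the left (the value is `1` if no strictly
`key`-decreasing enumeration of `supp` by a list exists). -/
open Classical in
noncomputable def oprodBy {α G : Type*} [Monoid G] (Φ : α → G) (key : α → ℝ) (supp : Set α) : G :=
  if h : ∃ l : List α, l.Pairwise (fun a b => key b < key a) ∧ ∀ a, a ∈ l ↔ a ∈ supp
  then (h.choose.map Φ).prod else 1

/-- The discrete non-abelian X-ray transform of `F` along the oriented line through `x`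
with direction `θ`: the ordered product of `F y` over lattice points `y` on the line,
the point furthest along the orientation contributing the leftmost factor. -/
noncomputable def discS {d : ℕ} {G : Type*} [Monoid G] (F : (Fin d → ℤ) → G)
    (x θ : EuclideanSpace ℝ (Fin d)) : G :=
  oprodBy F (fun z => ∑ i, ((z i : ℝ) - x i) * θ i)
    {z | (∃ t : ℝ, emb z = x + t • θ) ∧ F z ≠ 1}
/-- The length ℓ_ζ(γ) of the intersection of the line s ↦ x₀ + sθ with the half-open
unit cube U_ζ = ζ + [−1/2, 1/2)^d (note x ∈ U_ζ ↔ ∀ i, round (x i) = ζ i). -/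
noncomputable def lenIn {d : ℕ} (x₀ θ : EuclideanSpace ℝ (Fin d)) (ζ : Fin d → ℤ) : ℝ :=
  (MeasureTheory.volume {s : ℝ | ∀ i, round (x₀ i + s * θ i) = ζ i}).toReal

/-- The entry time of the line s ↦ x₀ + sθ into the cube U_ζ. -/
noncomputable def entryT {d : ℕ} (x₀ θ : EuclideanSpace ℝ (Fin d)) (ζ : Fin d → ℤ) : ℝ :=
  sInf {s : ℝ | ∀ i, round (x₀ i + s * θ i) = ζ i}

/-- The Frobenius norm ‖A‖ = √(Trace(A†A)) of a complex matrix. -/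
noncomputable def frob {n : ℕ} (A : Matrix (Fin n) (Fin n) ℂ) : ℝ :=
  Real.sqrt ((Matrix.trace (Aᴴ * A)).re)

/-- The transform S*(f)(γ): the ordered product of exp(ℓ_ζ(γ) f(ζ)) over the cubes U_ζ,
ζ in the support of f, met by the line s ↦ x₀ + sθ, the cube met last contributing the
leftmost factor. -/
noncomputable def SstarT {d n : ℕ} (f : (Fin d → ℤ) → Matrix (Fin n) (Fin n) ℂ)
    (x₀ θ : EuclideanSpace ℝ (Fin d)) : Matrix (Fin n) (Fin n) ℂ :=
  oprodBy (fun ζ => NormedSpace.exp ((lenIn x₀ θ ζ : ℂ) • f ζ)) (entryT x₀ θ)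
    {ζ : Fin d → ℤ | f ζ ≠ 0 ∧ 0 < lenIn x₀ θ ζ}

namespace Stmt19Aux

/-- strictly-descending lists with the same members coincide -/
theorem sorted_unique {α : Type*} {key : α → ℝ} :
    ∀ {l₁ l₂ : List α}, l₁.Pairwise (fun a b => key b < key a) →
      l₂.Pairwise (fun a b => key b < key a) → (∀ a, a ∈ l₁ ↔ a ∈ l₂) → l₁ = l₂ := by
  intro l₁
  induction l₁ with
  | nil =>
    intro l₂ _ _ hm
    cases l₂ with
    | nil => rfl
    | cons b t => exact absurd ((hm b).2 List.mem_cons_self) List.not_mem_nil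
  | cons a t ih =>
    intro l₂ h₁ h₂ hm
    cases l₂ with
    | nil => exact absurd ((hm a).1 List.mem_cons_self) List.not_mem_nil
    | cons b t₂ =>
      have hab : a = b := by
        rcases List.mem_cons.1 ((hm a).1 List.mem_cons_self) with h | h
        · exact h
        · -- a ∈ t₂, so key a < key b
          have h1 : key a < key b := (List.pairwise_cons.1 h₂).1 a h
          rcases List.mem_cons.1 ((hm b).2 List.mem_cons_self) with h' | h'
          · exact h'.symm
          · have h2 : key b < key a := (List.pairwise_cons.1 h₁).1 b h'
            exact absurd (h1.trans h2) (lt_irrefl _)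
      subst hab
      have ht : ∀ c, c ∈ t ↔ c ∈ t₂ := by
        intro c
        constructor
        · intro hc
          have hlt : key c < key a := (List.pairwise_cons.1 h₁).1 c hc
          rcases List.mem_cons.1 ((hm c).1 (List.mem_cons_of_mem a hc)) with h | h
          · exact absurd (h ▸ hlt) (lt_irrefl _)
          · exact h
        · intro hc
          have hlt : key c < key a := (List.pairwise_cons.1 h₂).1 c hc
          rcases List.mem_cons.1 ((hm c).2 (List.mem_cons_of_mem a hc)) with h | h
          · exact absurd (h ▸ hlt) (lt_irrefl _)
          · exact h
      rw [ih (List.pairwise_cons.1 h₁).2 (List.pairwise_cons.1 h₂).2 ht]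

theorem oprodBy_eq {α G : Type*} [Monoid G] (Φ : α → G) (key : α → ℝ) (supp : Set α)
    (l : List α) (hp : l.Pairwise (fun a b => key b < key a)) (hm : ∀ a, a ∈ l ↔ a ∈ supp) :
    oprodBy Φ key supp = (l.map Φ).prod := by
  have hex : ∃ l : List α, l.Pairwise (fun a b => key b < key a) ∧ ∀ a, a ∈ l ↔ a ∈ supp :=
    ⟨l, hp, hm⟩
  rw [oprodBy, dif_pos hex]
  obtain ⟨hp', hm'⟩ := hex.choose_spec
  rw [sorted_unique hp' hp (fun a => (hm' a).trans (hm a).symm)]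

theorem oprodBy_eq_of_superset {α G : Type*} [Monoid G] (Φ : α → G) (key : α → ℝ)
    (supp : Set α) (l : List α) (hp : l.Pairwise (fun a b => key b < key a))
    (hsub : ∀ a ∈ supp, a ∈ l) (h1 : ∀ a ∈ l, a ∉ supp → Φ a = 1) :
    oprodBy Φ key supp = (l.map Φ).prod := by
  classical
  set p : α → Bool := fun a => decide (a ∈ supp) with hpdef
  have hmem : ∀ a, a ∈ l.filter p ↔ a ∈ supp := by
    intro a
    rw [List.mem_filter]
    constructor
    · rintro ⟨_, h⟩; simpa [hpdef] using h
    · intro h; exact ⟨hsub a h, by simpa [hpdef] using h⟩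
  rw [oprodBy_eq Φ key supp (l.filter p) (hp.filter p) hmem]
  -- now show filtered product equals full product
  clear hmem hsub
  induction l with
  | nil => rfl
  | cons a t ih =>
    have ih' := ih (List.Pairwise.of_cons hp) (fun a ha h => h1 a (List.mem_cons_of_mem _ ha) h)
    by_cases ha : a ∈ supp
    · rw [List.filter_cons, if_pos (by simpa [hpdef] using ha)]
      simp only [List.map_cons, List.prod_cons, ih']
    · rw [List.filter_cons, if_neg (by simpa [hpdef] using ha)]
      simp only [List.map_cons, List.prod_cons, ih', h1 a List.mem_cons_self ha, one_mul]

theorem exists_sorted_list {α : Type*} (key : α → ℝ) (s : Finset α)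
    (hinj : ∀ a ∈ s, ∀ b ∈ s, key a = key b → a = b) :
    ∃ l : List α, l.Pairwise (fun a b => key b < key a) ∧ ∀ a, a ∈ l ↔ a ∈ s := by
  classical
  induction s using Finset.strongInduction with
  | _ s ih =>
    rcases s.eq_empty_or_nonempty with rfl | hne
    · exact ⟨[], List.Pairwise.nil, by simp⟩
    · obtain ⟨a, ha, hmax⟩ := s.exists_max_image key hne
      obtain ⟨l', hp', hm'⟩ := ih (s.erase a) (Finset.erase_ssubset ha)
        (fun x hx y hy => hinj x (Finset.mem_of_mem_erase hx) y (Finset.mem_of_mem_erase hy))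
      refine ⟨a :: l', List.pairwise_cons.2 ⟨?_, hp'⟩, ?_⟩
      · intro b hb
        have hbs := (hm' b).1 hb
        have hb1 : b ∈ s := Finset.mem_of_mem_erase hbs
        have hb2 : b ≠ a := Finset.ne_of_mem_erase hbs
        exact lt_of_le_of_ne (hmax b hb1) (fun h => hb2 (hinj b hb1 a ha h))
      · intro c
        simp only [List.mem_cons, hm', Finset.mem_erase]
        constructor
        · rintro (rfl | ⟨_, h⟩)
          · exact ha
          · exact h
        · intro hc
          by_cases h : c = a
          · exact Or.inl h
          · exact Or.inr ⟨h, hc⟩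

theorem prod_eq_of_units {α G : Type*} [Monoid G] (Φ Ψ : α → G) (l : List α) (w : α)
    (hw : w ∈ l) (hnd : l.Nodup) (hagree : ∀ a ∈ l, a ≠ w → Φ a = Ψ a)
    (hΦ : ∀ a, IsUnit (Φ a)) (hΨ : ∀ a, IsUnit (Ψ a))
    (h : (l.map Φ).prod = (l.map Ψ).prod) : Φ w = Ψ w := by
  obtain ⟨l₁, l₂, rfl⟩ := List.append_of_mem hw
  have hnd' := hnd
  rw [List.nodup_append] at hnd'
  have hw1 : w ∉ l₁ := fun hmem => hnd'.2.2 w hmem w List.mem_cons_self rfl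
  have hw2 : w ∉ l₂ := by
    have := hnd'.2.1
    rw [List.nodup_cons] at this
    exact this.1
  have e1 : l₁.map Φ = l₁.map Ψ :=
    List.map_congr_left (fun a ha => hagree a (by simp [ha]) (fun h => hw1 (h ▸ ha)))
  have e2 : l₂.map Φ = l₂.map Ψ :=
    List.map_congr_left (fun a ha => hagree a (by simp [ha]) (fun h => hw2 (h ▸ ha)))
  rw [List.map_append, List.map_append, List.prod_append, List.prod_append,
    List.map_cons, List.map_cons, List.prod_cons, List.prod_cons, e1, e2] at h
  have hP : IsUnit (l₁.map Ψ).prod := List.prod_isUnit (by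
    intro m hm; rw [List.mem_map] at hm; obtain ⟨a, _, rfl⟩ := hm; exact hΨ a)
  have hQ : IsUnit (l₂.map Ψ).prod := List.prod_isUnit (by
    intro m hm; rw [List.mem_map] at hm; obtain ⟨a, _, rfl⟩ := hm; exact hΨ a)
  have h' := hP.mul_left_cancel h
  exact hQ.mul_right_cancel h'

end Stmt19Aux

namespace Stmt19Aux

theorem pow_sub_pow_bound {𝔸 : Type*} [NormedRing 𝔸] {A B : 𝔸} {c : ℝ}
    (hA : ‖A‖ ≤ c) (hB : ‖B‖ ≤ c) :
    ∀ k : ℕ, ‖A ^ (k + 1) - B ^ (k + 1)‖ ≤ ((k : ℝ) + 1) * c ^ k * ‖A - B‖ := by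
  have hc : 0 ≤ c := le_trans (norm_nonneg A) hA
  intro k
  induction k with
  | zero => simp
  | succ k ih =>
    have key : A ^ (k + 1 + 1) - B ^ (k + 1 + 1)
        = A * (A ^ (k + 1) - B ^ (k + 1)) + (A - B) * B ^ (k + 1) := by
      rw [pow_succ' A (k+1), pow_succ' B (k+1)]
      noncomm_ring
    have hb' : ‖B ^ (k+1)‖ ≤ c ^ (k+1) :=
      le_trans (norm_pow_le' B k.succ_pos) (pow_le_pow_left₀ (norm_nonneg B) hB _)
    calc ‖A ^ (k + 1 + 1) - B ^ (k + 1 + 1)‖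
        ≤ ‖A * (A ^ (k + 1) - B ^ (k + 1))‖ + ‖(A - B) * B ^ (k + 1)‖ := by
          rw [key]; exact norm_add_le _ _
      _ ≤ ‖A‖ * ‖A ^ (k + 1) - B ^ (k + 1)‖ + ‖A - B‖ * ‖B ^ (k + 1)‖ := by
          gcongr <;> exact norm_mul_le _ _
      _ ≤ c * (((k : ℝ) + 1) * c ^ k * ‖A - B‖) + ‖A - B‖ * c ^ (k + 1) := by
          gcongr
      _ = ((k : ℝ) + 1 + 1) * c ^ (k + 1) * ‖A - B‖ := by ring
      _ = ((↑(k + 1) : ℝ) + 1) * c ^ (k + 1) * ‖A - B‖ := by push_cast; ring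

theorem exp_inj_banach {𝔸 : Type*} [NormedRing 𝔸] [NormedAlgebra ℂ 𝔸] [CompleteSpace 𝔸]
    {A B : 𝔸} (hA : ‖A‖ ≤ 1/4) (hB : ‖B‖ ≤ 1/4)
    (h : NormedSpace.exp A = NormedSpace.exp B) : A = B := by
  set D : ℝ := ‖A - B‖ with hDdef
  set T : ℕ → 𝔸 := fun k => ((k.factorial : ℂ))⁻¹ • (A ^ k - B ^ k) with hT
  have hTsum : Summable T := by
    have h1 := NormedSpace.expSeries_summable' (𝕂 := ℂ) A
    have h2 := NormedSpace.expSeries_summable' (𝕂 := ℂ) B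
    simpa [hT, smul_sub] using h1.sub h2
  have htsum0 : ∑' k, T k = 0 := by
    have h1 := NormedSpace.expSeries_summable' (𝕂 := ℂ) A
    have h2 := NormedSpace.expSeries_summable' (𝕂 := ℂ) B
    have e : ∑' k, T k = NormedSpace.exp A - NormedSpace.exp B := by
      simp only [NormedSpace.exp_eq_tsum ℂ]
      rw [← (h1.hasSum.sub h2.hasSum).tsum_eq]
      apply tsum_congr
      intro k
      show ((k.factorial : ℂ))⁻¹ • (A ^ k - B ^ k) = _
      rw [smul_sub]
    rw [e, h, sub_self]
  have hT0 : T 0 = 0 := by simp [hT]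
  have hT1 : T 1 = A - B := by simp [hT]
  have hs1 : Summable (fun k => T (k + 1)) := (summable_nat_add_iff 1).2 hTsum
  have hs2 : Summable (fun k => T (k + 2)) := by
    have := (summable_nat_add_iff 2).2 hTsum
    simpa using this
  have hsplit : ∑' k, T k = T 0 + (T 1 + ∑' k, T (k + 1 + 1)) := by
    rw [hTsum.tsum_eq_zero_add]
    congr 1
    rw [hs1.tsum_eq_zero_add]
  have h0 : (A - B) + ∑' k, T (k + 1 + 1) = 0 := by
    have := hsplit.symm.trans htsum0
    rwa [hT0, hT1, zero_add] at this
  have hAB : A - B = -∑' k, T (k + 1 + 1) := by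
    rw [eq_neg_iff_add_eq_zero]; exact h0
  -- termwise bound
  have bterm : ∀ k : ℕ, ‖T (k + 2)‖ ≤ (1/4 : ℝ) ^ (k + 1) * D := by
    intro k
    have hfacpos : (0:ℝ) < ((k+2).factorial : ℝ) := by positivity
    have h1 : ‖T (k + 2)‖ = (((k+2).factorial : ℝ))⁻¹ * ‖A ^ (k+2) - B ^ (k+2)‖ := by
      rw [hT]
      simp only [norm_smul, norm_inv]
      congr 2
      simp
    have h2 := pow_sub_pow_bound hA hB (k + 1)
    have hfac : (((k+2).factorial : ℝ))⁻¹ * ((k:ℝ)+2) ≤ 1 := by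
      rw [inv_mul_le_iff₀ hfacpos, mul_one]
      exact_mod_cast Nat.self_le_factorial (k+2)
    have hDpos : (0:ℝ) ≤ D := norm_nonneg _
    calc ‖T (k + 2)‖ = (((k+2).factorial : ℝ))⁻¹ * ‖A ^ (k+2) - B ^ (k+2)‖ := h1
      _ ≤ (((k+2).factorial : ℝ))⁻¹ * (((k:ℝ)+2) * (1/4:ℝ) ^ (k+1) * D) := by
          apply mul_le_mul_of_nonneg_left _ (by positivity)
          have : ((↑(k+1) : ℝ) + 1) = (k:ℝ) + 2 := by push_cast; ring
          rw [← this]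
          exact h2
      _ = ((((k+2).factorial : ℝ))⁻¹ * ((k:ℝ)+2)) * ((1/4:ℝ) ^ (k+1) * D) := by ring
      _ ≤ 1 * ((1/4:ℝ) ^ (k+1) * D) := by
          apply mul_le_mul_of_nonneg_right hfac (by positivity)
      _ = (1/4:ℝ) ^ (k+1) * D := by ring
  have hgeo : Summable (fun k : ℕ => (1/4 : ℝ) ^ (k + 1) * D) := by
    have : Summable (fun k : ℕ => (1/4 : ℝ) ^ k) :=
      summable_geometric_of_lt_one (by norm_num) (by norm_num)
    simpa [pow_succ, mul_comm, mul_assoc, mul_left_comm] using (this.mul_right ((1/4) * D))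
  have hnorm_sum : Summable (fun k => ‖T (k + 2)‖) :=
    Summable.of_nonneg_of_le (fun k => norm_nonneg _) bterm hgeo
  have hgeosum : ∑' k : ℕ, (1/4 : ℝ) ^ (k + 1) * D = D / 3 := by
    have h4 : ∑' k : ℕ, (1/4 : ℝ) ^ k = (1 - 1/4)⁻¹ :=
      tsum_geometric_of_lt_one (by norm_num) (by norm_num)
    calc ∑' k : ℕ, (1/4 : ℝ) ^ (k + 1) * D = ∑' k : ℕ, (1/4 : ℝ) ^ k * ((1/4) * D) := by
          congr 1 with k; ring
      _ = (∑' k : ℕ, (1/4 : ℝ) ^ k) * ((1/4) * D) := tsum_mul_right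
      _ = D / 3 := by rw [h4]; ring
  have hfinal : D ≤ D / 3 := by
    calc D = ‖A - B‖ := hDdef
      _ = ‖-∑' k, T (k + 1 + 1)‖ := by rw [hAB]
      _ = ‖∑' k, T (k + 1 + 1)‖ := norm_neg _
      _ ≤ ∑' k, ‖T (k + 1 + 1)‖ := norm_tsum_le_tsum_norm (by simpa using hnorm_sum)
      _ ≤ ∑' k : ℕ, (1/4 : ℝ) ^ (k + 1) * D := by
          apply Summable.tsum_le_tsum _ (by simpa using hnorm_sum) hgeo
          intro k
          simpa using bterm k
      _ = D / 3 := hgeosum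
  have hD0 : D = 0 := by
    have := norm_nonneg (A - B)
    rw [← hDdef] at this
    linarith
  have hz : A - B = 0 := by
    have h' : ‖A - B‖ = 0 := by rw [← hDdef]; exact hD0
    exact norm_eq_zero.1 h'
  exact sub_eq_zero.1 hz



theorem frob_eq_norm {n : ℕ} (A : Matrix (Fin n) (Fin n) ℂ) :
    letI := Matrix.frobeniusSeminormedAddCommGroup (m := Fin n) (n := Fin n) (α := ℂ)
    frob A = ‖A‖ := by
  letI := Matrix.frobeniusSeminormedAddCommGroup (m := Fin n) (n := Fin n) (α := ℂ)
  rw [Matrix.frobenius_norm_def, frob]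
  rw [Real.sqrt_eq_rpow]
  congr 1
  rw [Matrix.trace]
  simp only [Matrix.diag_apply, Matrix.mul_apply, Matrix.conjTranspose_apply]
  rw [Complex.re_sum]
  rw [Finset.sum_comm]
  congr 1 with i
  rw [Complex.re_sum]
  congr 1 with j
  rw [RCLike.star_def]
  rw [Complex.conj_mul']
  norm_cast



theorem frob_eq_norm' {n : ℕ} (A : Matrix (Fin n) (Fin n) ℂ) :
    letI : NormedRing (Matrix (Fin n) (Fin n) ℂ) := Matrix.frobeniusNormedRing
    frob A = ‖A‖ := by
  letI : NormedRing (Matrix (Fin n) (Fin n) ℂ) := Matrix.frobeniusNormedRing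
  exact frob_eq_norm A

theorem exp_inj_matrix {n : ℕ} (A B : Matrix (Fin n) (Fin n) ℂ)
    (hA : frob A ≤ 1/4) (hB : frob B ≤ 1/4)
    (h : NormedSpace.exp A = NormedSpace.exp B) : A = B := by
  letI : NormedRing (Matrix (Fin n) (Fin n) ℂ) := Matrix.frobeniusNormedRing
  letI : NormedAlgebra ℂ (Matrix (Fin n) (Fin n) ℂ) := Matrix.frobeniusNormedAlgebra
  haveI : CompleteSpace (Matrix (Fin n) (Fin n) ℂ) := by
    exact FiniteDimensional.complete ℂ _
  refine exp_inj_banach (A := A) (B := B) ?_ ?_ h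
  · rw [← frob_eq_norm' A]; exact hA
  · rw [← frob_eq_norm' B]; exact hB




theorem frob_smul {n : ℕ} (c : ℝ) (hc : 0 ≤ c) (A : Matrix (Fin n) (Fin n) ℂ) :
    frob ((c : ℂ) • A) = c * frob A := by
  letI : NormedRing (Matrix (Fin n) (Fin n) ℂ) := Matrix.frobeniusNormedRing
  letI : NormedAlgebra ℂ (Matrix (Fin n) (Fin n) ℂ) := Matrix.frobeniusNormedAlgebra
  rw [frob_eq_norm', frob_eq_norm', norm_smul]
  simp [Complex.norm_real, abs_of_nonneg hc]

end Stmt19Aux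

namespace Stmt19Aux
open MeasureTheory

theorem round_iff {x : ℝ} {k : ℤ} : round x = k ↔ (k:ℝ) - 1/2 ≤ x ∧ x < (k:ℝ) + 1/2 := by
  rw [round_eq, Int.floor_eq_iff]
  constructor <;> rintro ⟨h1, h2⟩ <;> constructor <;> linarith

theorem lineSet_convex {d : ℕ} (x₀ θ : EuclideanSpace ℝ (Fin d)) (z : Fin d → ℤ)
    {s₁ s₂ s : ℝ} (h₁ : ∀ i, round (x₀ i + s₁ * θ i) = z i)
    (h₂ : ∀ i, round (x₀ i + s₂ * θ i) = z i) (hle : s₁ ≤ s) (hle' : s ≤ s₂) :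
    ∀ i, round (x₀ i + s * θ i) = z i := by
  intro i
  have a₁ := round_iff.1 (h₁ i)
  have a₂ := round_iff.1 (h₂ i)
  rw [round_iff]
  rcases le_or_gt 0 (θ i) with hθ | hθ
  · constructor <;> nlinarith [a₁.1, a₁.2, a₂.1, a₂.2, mul_le_mul_of_nonneg_right hle hθ,
      mul_le_mul_of_nonneg_right hle' hθ]
  · constructor <;> nlinarith [a₁.1, a₁.2, a₂.1, a₂.2,
      mul_le_mul_of_nonpos_right hle (le_of_lt hθ),
      mul_le_mul_of_nonpos_right hle' (le_of_lt hθ)]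

theorem two_points_of_pos {E : Set ℝ} (h : 0 < (volume E).toReal) :
    ∃ p ∈ E, ∃ q ∈ E, p < q := by
  by_contra hc
  push_neg at hc
  have hsub : E.Subsingleton := by
    intro p hp q hq
    exact le_antisymm (hc q hq p hp) (hc p hp q hq)
  have := hsub.measure_zero (μ := volume)
  rw [this] at h
  simp at h

theorem sInf_ne_of_disjoint {I J : Set ℝ}
    (hIc : ∀ ⦃x y z : ℝ⦄, x ∈ I → z ∈ I → x ≤ y → y ≤ z → y ∈ I)
    (hJc : ∀ ⦃x y z : ℝ⦄, x ∈ J → z ∈ J → x ≤ y → y ≤ z → y ∈ J)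
    (hd : ∀ x, x ∈ I → x ∈ J → False)
    (hIb : BddBelow I) (hJb : BddBelow J)
    (hI2 : ∃ p ∈ I, ∃ q ∈ I, p < q) (hJ2 : ∃ p ∈ J, ∃ q ∈ J, p < q) :
    sInf I ≠ sInf J := by
  intro hEq
  obtain ⟨p, hp, q, hq, hpq⟩ := hI2
  obtain ⟨p', hp', q', hq', hpq'⟩ := hJ2
  have hne : I.Nonempty := ⟨p, hp⟩
  have hne' : J.Nonempty := ⟨p', hp'⟩
  have hqI : sInf I < q := lt_of_le_of_lt (csInf_le hIb hp) hpq
  have hqJ : sInf I < q' := by rw [hEq]; exact lt_of_le_of_lt (csInf_le hJb hp') hpq'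
  have h1 : sInf I < min q q' := lt_min hqI hqJ
  obtain ⟨x, hxI, hxu⟩ := (csInf_lt_iff hIb hne).1 h1
  have h2 : sInf J < min q q' := hEq ▸ h1
  obtain ⟨y, hyJ, hyu⟩ := (csInf_lt_iff hJb hne').1 h2
  rcases le_total x y with hxy | hxy
  · exact hd y (hIc hxI hq hxy (le_of_lt (lt_of_lt_of_le hyu (min_le_left _ _)))) hyJ
  · exact hd x hxI (hJc hyJ hq' hxy (le_of_lt (lt_of_lt_of_le hxu (min_le_right _ _))))

theorem coord_le {d : ℕ} {z : Fin d → ℤ} {r : ℝ} (h : ‖emb z‖ ≤ r) (i : Fin d) :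
    |(z i : ℝ)| ≤ r := by
  have h0 : |(z i : ℝ)| ≤ ‖emb z‖ := by
    rw [EuclideanSpace.norm_eq]
    have : |(z i : ℝ)| = Real.sqrt (‖emb z i‖^2) := by
      rw [Real.sqrt_sq_eq_abs]
      simp [emb]
    rw [this]
    apply Real.sqrt_le_sqrt
    exact Finset.single_le_sum (f := fun j => ‖emb z j‖^2) (fun j _ => sq_nonneg _)
      (Finset.mem_univ i)
  linarith
end Stmt19Aux

noncomputable def lineBase (δ : ℝ) (w : Fin 2 → ℤ) : EuclideanSpace ℝ (Fin 2) :=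
  WithLp.toLp 2 ![(w 0 : ℝ) + 1/2 - δ, (w 1 : ℝ) + 1/2]

noncomputable def lineDir (a b : ℝ) : EuclideanSpace ℝ (Fin 2) := WithLp.toLp 2 ![a, -b]

namespace Stmt19Aux

theorem mem_E_iff (δ a b : ℝ) (w z : Fin 2 → ℤ) (s : ℝ) :
    (∀ i, round (lineBase δ w i + s * lineDir a b i) = z i) ↔
      round (((w 0 : ℝ) + 1/2 - δ) + s * a) = z 0 ∧
      round (((w 1 : ℝ) + 1/2) + s * (-b)) = z 1 := by
  rw [Fin.forall_fin_two]
  rfl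

section Line
variable {r δ a b : ℝ} {w : Fin 2 → ℤ}
variable (hr : 0 < r) (hδ0 : 0 < δ) (hδ : δ ≤ 1/2) (ha : 1/2 ≤ a) (ha1 : a ≤ 1)
  (hb0 : 0 < b) (hbs : b * (4*r+4) ≤ 1/4) (hδb : δ * b ≤ a) (hw : ∀ i, |(w i : ℝ)| ≤ r)

include hδ0 hδ ha hb0 hδb in
theorem E_w_eq :
    {s : ℝ | ∀ i, round (lineBase δ w i + s * lineDir a b i) = w i} = Set.Ioo 0 (δ/a) := by
  have ha0 : (0:ℝ) < a := by linarith
  ext s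
  simp only [Set.mem_setOf_eq, Set.mem_Ioo, mem_E_iff]
  constructor
  · rintro ⟨h0, h1⟩
    have c0 := round_iff.1 h0
    have c1 := round_iff.1 h1
    constructor
    · nlinarith [c1.2]
    · rw [lt_div_iff₀ ha0]
      nlinarith [c0.2]
  · rintro ⟨hs0, hs1⟩
    have hsa : s * a < δ := by
      rw [lt_div_iff₀ ha0] at hs1
      linarith
    have hsa0 : 0 < s * a := by positivity
    have hsb0 : 0 < s * b := by positivity
    have hsb1 : s * b < 1 := by
      have : s * b < (δ/a) * b := by
        apply mul_lt_mul_of_pos_right hs1 hb0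
      have h2 : (δ/a) * b ≤ 1 := by
        rw [div_mul_eq_mul_div, div_le_one ha0]
        linarith
      linarith
    constructor
    · rw [round_iff]
      constructor <;> push_cast <;> nlinarith
    · rw [round_iff]
      constructor <;> push_cast <;> nlinarith

include hr hδ0 hδ ha ha1 hb0 hbs hw in
theorem E_z_cases (z : Fin 2 → ℤ) (hz : ∀ i, |(z i : ℝ)| ≤ r) (s : ℝ)
    (hs : ∀ i, round (lineBase δ w i + s * lineDir a b i) = z i) :
    (z 1 = w 1 ∧ w 0 ≤ z 0) ∨ (z 1 = w 1 + 1 ∧ z 0 ≤ w 0) := by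
  have ha0 : (0:ℝ) < a := by linarith
  rw [mem_E_iff] at hs
  obtain ⟨h0, h1⟩ := hs
  have c0 := round_iff.1 h0
  have c1 := round_iff.1 h1
  simp only [mul_neg] at c1
  have hw0 := abs_le.1 (hw 0)
  have hw1 := abs_le.1 (hw 1)
  have hz0 := abs_le.1 (hz 0)
  have hz1 := abs_le.1 (hz 1)
  -- bound on s
  have hsa : |s * a| ≤ 2*r + 1 := by
    rw [abs_le]
    constructor <;> nlinarith [c0.1, c0.2]
  have hs4 : |s| ≤ 4*r + 4 := by
    rw [abs_mul, abs_of_pos ha0] at hsa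
    have habs : |s| * (1/2) ≤ |s| * a := mul_le_mul_of_nonneg_left ha (abs_nonneg s)
    nlinarith
  have hsb : |s * b| ≤ 1/4 := by
    rw [abs_mul, abs_of_pos hb0]
    calc |s| * b ≤ (4*r+4) * b := by apply mul_le_mul_of_nonneg_right hs4 (le_of_lt hb0)
      _ ≤ 1/4 := by linarith [hbs]
  have hsbl := abs_le.1 hsb
  -- z 1 ∈ {w 1, w 1 + 1}
  have hk1 : w 1 ≤ z 1 := by
    have : (w 1 : ℝ) - 1 < (z 1 : ℝ) := by nlinarith [c1.2]
    have h' : w 1 - 1 < z 1 := by exact_mod_cast this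
    omega
  have hk2 : z 1 ≤ w 1 + 1 := by
    have : (z 1 : ℝ) < (w 1 : ℝ) + 2 := by nlinarith [c1.1]
    have h' : z 1 < w 1 + 2 := by exact_mod_cast this
    omega
  rcases eq_or_lt_of_le hk1 with hk | hk
  · -- z 1 = w 1 : then s > 0 and z 0 ≥ w 0
    left
    refine ⟨hk.symm, ?_⟩
    have hzw : (z 1 : ℝ) = (w 1 : ℝ) := by exact_mod_cast hk.symm
    have hsbpos : 0 < s * b := by nlinarith [c1.2]
    have hspos : 0 < s := by nlinarith
    have hsapos : 0 < s * a := by positivity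
    have : (w 0 : ℝ) - 1 < (z 0 : ℝ) := by nlinarith [c0.2]
    have h' : w 0 - 1 < z 0 := by exact_mod_cast this
    omega
  · -- z 1 = w 1 + 1
    right
    have hk' : z 1 = w 1 + 1 := by omega
    refine ⟨hk', ?_⟩
    have hzw : (z 1 : ℝ) = (w 1 : ℝ) + 1 := by exact_mod_cast hk'
    have hsbneg : s * b ≤ 0 := by nlinarith [c1.1]
    have hsneg : s ≤ 0 := by nlinarith
    have hsaneg : s * a ≤ 0 := by nlinarith
    have : (z 0 : ℝ) < (w 0 : ℝ) + 2 - 2*δ := by nlinarith [c0.1]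
    have h' : (z 0 : ℝ) < (w 0 : ℝ) + 1 := by nlinarith
    have h'' : z 0 < w 0 + 1 := by exact_mod_cast h'
    omega

include hr hδ0 hδ ha hw in
theorem E_z_bdd (z : Fin 2 → ℤ) (hz0 : |(z 0 : ℝ)| ≤ r) (s : ℝ)
    (hs : ∀ i, round (lineBase δ w i + s * lineDir a b i) = z i) :
    -(4*r+4) ≤ s ∧ s ≤ 4*r+4 := by
  have ha0 : (0:ℝ) < a := by linarith
  rw [mem_E_iff] at hs
  have c0 := round_iff.1 hs.1
  have hw0 := abs_le.1 (hw 0)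
  have hz0' := abs_le.1 hz0
  have hsa : |s * a| ≤ 2*r + 1 + δ := by
    rw [abs_le]
    constructor <;> nlinarith [c0.1, c0.2]
  rw [abs_mul, abs_of_pos ha0] at hsa
  have h2 : |s| * (1/2) ≤ |s| * a := mul_le_mul_of_nonneg_left ha (abs_nonneg s)
  have hδ' : δ ≤ 1/2 := hδ
  have h3 : |s| ≤ 4*r + 4 := by nlinarith
  have := abs_le.1 h3
  exact ⟨this.1, this.2⟩

include hδ0 hδ ha hb0 hδb in
theorem lenIn_w : lenIn (lineBase δ w) (lineDir a b) w = δ / a := by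
  have ha0 : (0:ℝ) < a := by linarith
  rw [lenIn, E_w_eq hδ0 hδ ha hb0 hδb, Real.volume_Ioo, ENNReal.toReal_ofReal (by rw [sub_zero]; positivity)]
  ring

theorem norm_lineDir (hab : a^2 + b^2 = 1) : ‖lineDir a b‖ = 1 := by
  rw [show lineDir a b = (WithLp.toLp 2 ![a, -b] : EuclideanSpace ℝ (Fin 2)) from rfl]
  rw [EuclideanSpace.norm_eq]
  rw [Fin.sum_univ_two]
  norm_num [Real.norm_eq_abs, sq_abs]
  rw [hab]

end Line

theorem lineBase_inj (δ : ℝ) {w w' : Fin 2 → ℤ} (h : lineBase δ w = lineBase δ w') : w = w' := by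
  have h0 : ((w 0 : ℝ) + 1/2 - δ) = ((w' 0 : ℝ) + 1/2 - δ) := congrArg (fun v => v 0) h
  have h1 : ((w 1 : ℝ) + 1/2) = ((w' 1 : ℝ) + 1/2) := congrArg (fun v => v 1) h
  have e0 : (w 0 : ℝ) = (w' 0 : ℝ) := by linarith
  have e1 : (w 1 : ℝ) = (w' 1 : ℝ) := by linarith
  have e0' : w 0 = w' 0 := by exact_mod_cast e0
  have e1' : w 1 = w' 1 := by exact_mod_cast e1
  funext i
  fin_cases i <;> assumption

theorem nonempty_of_lenIn_pos {d : ℕ} {x₀ θ : EuclideanSpace ℝ (Fin d)} {z : Fin d → ℤ}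
    (h : 0 < lenIn x₀ θ z) :
    {s : ℝ | ∀ i, round (x₀ i + s * θ i) = z i}.Nonempty := by
  by_contra hc
  rw [Set.not_nonempty_iff_eq_empty] at hc
  rw [lenIn, hc] at h
  simp at h

end Stmt19Aux

/-- Theorem 5.5, d = 2, uniqueness form: there is a finite set Γ of
oriented lines (given as pairs (base point, unit direction)) with #Γ = #(B_r ∩ ℤ²) such
that the transform S* on Γ uniquely determines every M(n,ℂ)-valued function supported
in B_r ∩ ℤ² whose values have Frobenius norm at most M. -/
theorem stmt19 (n : ℕ) (hn : 1 ≤ n) (r M : ℝ) (hr : 0 < r) (hM : 0 < M) :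
    ∃ Γ : Finset (EuclideanSpace ℝ (Fin 2) × EuclideanSpace ℝ (Fin 2)),
      (∀ γ ∈ Γ, ‖γ.2‖ = 1) ∧
      Γ.card = {z : Fin 2 → ℤ | ‖emb z‖ ≤ r}.ncard ∧
      ∀ f g : (Fin 2 → ℤ) → Matrix (Fin n) (Fin n) ℂ,
        (∀ z : Fin 2 → ℤ, ¬ ‖emb z‖ ≤ r → f z = 0) →
        (∀ z : Fin 2 → ℤ, ¬ ‖emb z‖ ≤ r → g z = 0) →
        (∀ z : Fin 2 → ℤ, frob (f z) ≤ M) →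
        (∀ z : Fin 2 → ℤ, frob (g z) ≤ M) →
        (∀ γ ∈ Γ, SstarT f γ.1 γ.2 = SstarT g γ.1 γ.2) →
        f = g := by
  classical
  open Stmt19Aux in
  -- constants
  have hr4 : (0:ℝ) < 4*r+5 := by linarith
  set t : ℝ := 1/(8*(4*r+5)) with htdef
  have ht0 : 0 < t := by positivity
  have ht1 : t ≤ 1/40 := by
    rw [htdef, div_le_div_iff₀ (by positivity) (by norm_num)]
    linarith
  have ht2 : (0:ℝ) < 1 + t^2 := by positivity
  set a : ℝ := (1-t^2)/(1+t^2) with hadef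
  set b : ℝ := 2*t/(1+t^2) with hbdef
  have ha : 1/2 ≤ a := by
    rw [hadef, le_div_iff₀ ht2]
    nlinarith
  have ha0 : (0:ℝ) < a := by linarith
  have ha1 : a ≤ 1 := by
    rw [hadef, div_le_one ht2]
    nlinarith
  have hb0 : 0 < b := by positivity
  have hb2t : b ≤ 2*t := by
    rw [hbdef]
    apply div_le_self (by positivity)
    nlinarith
  have ht8 : t * (8*(4*r+5)) = 1 := by
    rw [htdef]; field_simp
  have hbs : b * (4*r+4) ≤ 1/4 := by
    have h3 : b * (4*r+4) ≤ 2*t*(4*r+4) :=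
      mul_le_mul_of_nonneg_right hb2t (by linarith)
    nlinarith [ht8, ht0]
  have hab : a^2 + b^2 = 1 := by
    rw [hadef, hbdef]
    field_simp
    ring
  set δ : ℝ := min (1/2) (1/(8*(M+1))) with hδdef
  have hδ0 : 0 < δ := lt_min (by norm_num) (by positivity)
  have hδ : δ ≤ 1/2 := min_le_left _ _
  have hδM : δ ≤ 1/(8*(M+1)) := min_le_right _ _
  have hδb : δ * b ≤ a := by nlinarith
  have hℓM : (δ/a) * M ≤ 1/4 := by
    have hda : δ/a ≤ 2*δ := by
      rw [div_le_iff₀ ha0]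
      nlinarith
    have h1 : (δ/a) * M ≤ 2*δ*M := by
      apply mul_le_mul_of_nonneg_right hda (le_of_lt hM)
    have h2 : 2*δ*M ≤ 2*(1/(8*(M+1)))*M := by nlinarith
    have hM8 : (1/(8*(M+1))) * (8*(M+1)) = 1 := by field_simp
    have hM0 : (0:ℝ) ≤ 1/(8*(M+1)) := by positivity
    nlinarith [hM8, hM0]
  have hℓpos : 0 < δ/a := by positivity
  -- the lattice ball
  set L : Set (Fin 2 → ℤ) := {z : Fin 2 → ℤ | ‖emb z‖ ≤ r} with hLdef
  set R : ℤ := ⌈r⌉ with hRdef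
  have hR0 : 0 < R := by
    rw [hRdef]
    exact Int.ceil_pos.2 hr
  have hcoordZ : ∀ z ∈ L, ∀ i, -R ≤ z i ∧ z i ≤ R := by
    intro z hz i
    have h1 := abs_le.1 (coord_le hz i)
    constructor
    · have : -(R:ℝ) ≤ (z i : ℝ) := by
        have : -(R:ℝ) ≤ -r := by simp [hRdef]; exact Int.le_ceil r
        linarith [h1.1]
      exact_mod_cast this
    · have : (z i : ℝ) ≤ (R:ℝ) := le_trans h1.2 (by rw [hRdef]; exact Int.le_ceil r)
      exact_mod_cast this
  have hLfin : L.Finite := by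
    apply Set.Finite.subset (Set.Finite.pi (fun i : Fin 2 => Set.finite_Icc (-R) R))
    intro z hz
    rw [Set.mem_pi]
    intro i _
    rw [Set.mem_Icc]
    exact hcoordZ z hz i
  set LF : Finset (Fin 2 → ℤ) := hLfin.toFinset with hLFdef
  have hLFmem : ∀ z, z ∈ LF ↔ ‖emb z‖ ≤ r := by
    intro z
    rw [hLFdef, Set.Finite.mem_toFinset]
    rfl
  refine ⟨LF.image (fun w => (lineBase δ w, lineDir a b)), ?_, ?_, ?_⟩
  · intro γ hγ
    rw [Finset.mem_image] at hγ
    obtain ⟨w, _, rfl⟩ := hγ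
    exact norm_lineDir hab
  · rw [Finset.card_image_of_injOn, Set.ncard_eq_toFinset_card L hLfin]
    intro w _ w' _ h
    rw [Prod.mk.injEq] at h
    exact lineBase_inj δ h.1
  · intro f g hf hg hfM hgM hS
    -- the key induction
    have claim : ∀ N : ℕ, ∀ w : Fin 2 → ℤ, ‖emb w‖ ≤ r →
        ((R - w 1) * (2*R + 2) + (R - w 0)).toNat = N → f w = g w := by
      intro N
      induction N using Nat.strong_induction_on with
      | _ N IH =>
        intro w hwL hwN
        have hwLmem : w ∈ L := hwL
        have hwc : ∀ i, |(w i : ℝ)| ≤ r := coord_le hwL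
        have hwZ := hcoordZ w hwLmem
        set x₀ : EuclideanSpace ℝ (Fin 2) := lineBase δ w with hx₀def
        set θ : EuclideanSpace ℝ (Fin 2) := lineDir a b with hθdef
        have hγmem : (x₀, θ) ∈ LF.image (fun w => (lineBase δ w, lineDir a b)) := by
          rw [Finset.mem_image]
          exact ⟨w, (hLFmem w).2 hwL, rfl⟩
        have hSw := hS (x₀, θ) hγmem
        -- the finite set of relevant cubes
        set T : Finset (Fin 2 → ℤ) := LF.filter (fun z => 0 < lenIn x₀ θ z) with hTdef
        have hTmem : ∀ z, z ∈ T ↔ (‖emb z‖ ≤ r ∧ 0 < lenIn x₀ θ z) := by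
          intro z
          rw [hTdef, Finset.mem_filter, hLFmem]
        -- lenIn at w
        have hlw : lenIn x₀ θ w = δ/a := lenIn_w hδ0 hδ ha hb0 hδb
        have hwT : w ∈ T := (hTmem w).2 ⟨hwL, by rw [hlw]; exact hℓpos⟩
        -- distinct entry times on T
        have hkey : ∀ z ∈ T, ∀ z' ∈ T, entryT x₀ θ z = entryT x₀ θ z' → z = z' := by
          intro z hz z' hz' he
          by_contra hne
          obtain ⟨hzL, hzlen⟩ := (hTmem z).1 hz
          obtain ⟨hzL', hzlen'⟩ := (hTmem z').1 hz'
          refine sInf_ne_of_disjoint (I := {s : ℝ | ∀ i, round (x₀ i + s * θ i) = z i})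
            (J := {s : ℝ | ∀ i, round (x₀ i + s * θ i) = z' i}) ?_ ?_ ?_ ?_ ?_ ?_ ?_ he
          · intro x y u hx hu hxy hyu
            exact lineSet_convex x₀ θ z hx hu hxy hyu
          · intro x y u hx hu hxy hyu
            exact lineSet_convex x₀ θ z' hx hu hxy hyu
          · intro s hs hs'
            exact hne (funext (fun i => (hs i).symm.trans (hs' i)))
          · exact ⟨-(4*r+4), fun s hs =>
              (E_z_bdd hr hδ0 hδ ha hwc z (coord_le hzL 0) s hs).1⟩
          · exact ⟨-(4*r+4), fun s hs =>
              (E_z_bdd hr hδ0 hδ ha hwc z' (coord_le hzL' 0) s hs).1⟩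
          · exact two_points_of_pos hzlen
          · exact two_points_of_pos hzlen'
        obtain ⟨l, hlp, hlm⟩ := exists_sorted_list (entryT x₀ θ) T hkey
        have hlT : ∀ z ∈ l, z ∈ T := fun z hz => (hlm z).1 hz
        set Φf : (Fin 2 → ℤ) → Matrix (Fin n) (Fin n) ℂ :=
          fun ζ => NormedSpace.exp ((lenIn x₀ θ ζ : ℂ) • f ζ) with hΦfdef
        set Φg : (Fin 2 → ℤ) → Matrix (Fin n) (Fin n) ℂ :=
          fun ζ => NormedSpace.exp ((lenIn x₀ θ ζ : ℂ) • g ζ) with hΦgdef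
        have hfprod : SstarT f x₀ θ = (l.map Φf).prod := by
          rw [SstarT]
          apply oprodBy_eq_of_superset
          · exact hlp
          · intro z hz
            obtain ⟨hz1, hz2⟩ := hz
            rw [hlm]
            rw [hTmem]
            refine ⟨?_, hz2⟩
            by_contra hc
            exact hz1 (hf z hc)
          · intro z hz hns
            have hzT := hlT z hz
            have := (hTmem z).1 hzT
            have hz0 : f z = 0 := by
              by_contra hc
              exact hns ⟨hc, this.2⟩
            simp only [hΦfdef, hz0, smul_zero]
            exact NormedSpace.exp_zero
        have hgprod : SstarT g x₀ θ = (l.map Φg).prod := by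
          rw [SstarT]
          apply oprodBy_eq_of_superset
          · exact hlp
          · intro z hz
            obtain ⟨hz1, hz2⟩ := hz
            rw [hlm, hTmem]
            refine ⟨?_, hz2⟩
            by_contra hc
            exact hz1 (hg z hc)
          · intro z hz hns
            have hzT := hlT z hz
            have := (hTmem z).1 hzT
            have hz0 : g z = 0 := by
              by_contra hc
              exact hns ⟨hc, this.2⟩
            simp only [hΦgdef, hz0, smul_zero]
            exact NormedSpace.exp_zero
        -- all other cubes in T are already known
        have hagree : ∀ z ∈ l, z ≠ w → Φf z = Φg z := by
          intro z hzl hzw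
          obtain ⟨hzL, hzlen⟩ := (hTmem z).1 (hlT z hzl)
          have hzZ := hcoordZ z hzL
          obtain ⟨s, hsE⟩ := nonempty_of_lenIn_pos hzlen
          have hcases := E_z_cases hr hδ0 hδ ha ha1 hb0 hbs hwc z (coord_le hzL) s hsE
          have hρz : ((R - z 1) * (2*R + 2) + (R - z 0)).toNat < N := by
            rw [← hwN]
            have hb0' := hwZ 0
            have hb1' := hwZ 1
            have hc0' := hzZ 0
            have hc1' := hzZ 1
            rcases hcases with ⟨h1, h2⟩ | ⟨h1, h2⟩
            · have hz0w : z 0 ≠ w 0 := by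
                intro hc
                apply hzw
                funext i
                fin_cases i
                · exact hc
                · exact h1
              have hP : 0 ≤ (R - w 1) * (2*R + 2) := mul_nonneg (by omega) (by omega)
              rw [h1]
              omega
            · have hm1 : 1 ≤ R - w 1 := by omega
              have hm : 1 * (2*R+2) ≤ (R - w 1) * (2*R + 2) :=
                mul_le_mul_of_nonneg_right hm1 (by omega)
              have key : (R - (w 1 + 1)) * (2*R+2) = (R - w 1) * (2*R+2) - (2*R+2) := by ring
              rw [h1, key]
              omega
          have hfz : f z = g z := IH _ hρz z hzL rfl
          simp only [hΦfdef, hΦgdef, hfz]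
        have hnd : l.Nodup := by
          apply List.Pairwise.imp _ hlp
          intro x y h hxy
          rw [hxy] at h
          exact lt_irrefl _ h
        have hwl : w ∈ l := (hlm w).2 hwT
        have hexp : Φf w = Φg w := by
          apply prod_eq_of_units Φf Φg l w hwl hnd hagree
          · intro ζ
            exact Matrix.isUnit_exp _
          · intro ζ
            exact Matrix.isUnit_exp _
          · rw [← hfprod, ← hgprod]
            exact hSw
        -- conclude via injectivity of exp near 0
        have hfrobf : frob ((lenIn x₀ θ w : ℂ) • f w) ≤ 1/4 := by
          rw [hlw, frob_smul _ (le_of_lt hℓpos)]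
          calc (δ/a) * frob (f w) ≤ (δ/a) * M := by
                apply mul_le_mul_of_nonneg_left (hfM w) (le_of_lt hℓpos)
            _ ≤ 1/4 := hℓM
        have hfrobg : frob ((lenIn x₀ θ w : ℂ) • g w) ≤ 1/4 := by
          rw [hlw, frob_smul _ (le_of_lt hℓpos)]
          calc (δ/a) * frob (g w) ≤ (δ/a) * M := by
                apply mul_le_mul_of_nonneg_left (hgM w) (le_of_lt hℓpos)
            _ ≤ 1/4 := hℓM
        have hsmul : (lenIn x₀ θ w : ℂ) • f w = (lenIn x₀ θ w : ℂ) • g w :=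
          exp_inj_matrix _ _ hfrobf hfrobg hexp
        have hℓne : (lenIn x₀ θ w : ℂ) ≠ 0 := by
          rw [hlw]
          exact_mod_cast ne_of_gt hℓpos
        exact smul_right_injective _ hℓne hsmul
    funext z
    by_cases hz : ‖emb z‖ ≤ r
    · exact claim _ z hz rfl
    · rw [hf z hz, hg z hz]
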